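/- Let p ≥ 1 be an integer and let l1, l2 be positive reals with l2 > (2·(2p+3)/(p·(p+1)))·l1. Set f(b) = -l1·b^(2p+4) + (l2 + l1)·b^(2p+3) - ((p+1)²·l2 - (2p+3)·l1)·b^(p+3) + 2·(p(p+2)·l2 - (2p+3)·l1)·b^(p+2) - ((p+1)²·l2 - (2p+3)·l1)·b^(p+1) + (l2 + l1)·b - l1. Then f has exactly 3 distinct positive real roots, and if b₀ ≠ 1 is one of them then so is 1/b₀. -/

import Mathlib

open Finset

noncomputable def chebA : ℕ → ℕ → ℝ
  | 0, 0 => 2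
  | 0, _+1 => 0
  | (n+1), k =>
    if k ≤ n+1 then
      2*((n:ℝ)+1) * (Nat.factorial (n+k)) / ((Nat.factorial (2*k)) * (Nat.factorial (n+1-k)))
    else 0

lemma chebA_of_le (n k : ℕ) (h : k ≤ n+1) :
    chebA (n+1) k = 2*((n:ℝ)+1) * (Nat.factorial (n+k)) /
      ((Nat.factorial (2*k)) * (Nat.factorial (n+1-k))) := by
  simp [chebA, h]

lemma chebA_eq_zero (n k : ℕ) (h : n < k) : chebA n k = 0 := by
  match n, k with
  | 0, k+1 => rfl
  | n+1, k => simp [chebA, Nat.not_le.mpr h, Nat.lt_irrefl]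

lemma chebA_zero (n : ℕ) : chebA n 0 = 2 := by
  match n with
  | 0 => rfl
  | n+1 =>
    rw [chebA_of_le n 0 (by omega)]
    simp [Nat.factorial_succ]
    have h3 : (Nat.factorial n : ℝ) ≠ 0 := Nat.cast_ne_zero.mpr (Nat.factorial_ne_zero n)
    field_simp

lemma chebA_one (n : ℕ) : chebA (n+1) 1 = ((n:ℝ)+1)^2 := by
  rw [chebA_of_le n 1 (by omega)]
  have h1 : n + 1 - 1 = n := by omega
  rw [h1]
  have h2 : (Nat.factorial (n+1) : ℝ) = (n+1) * Nat.factorial n := by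
    rw [Nat.factorial_succ]; push_cast; ring
  rw [h2]
  have h3 : (Nat.factorial n : ℝ) ≠ 0 := Nat.cast_ne_zero.mpr (Nat.factorial_ne_zero n)
  rw [show (2*1 : ℕ) = 2 by rfl, show (Nat.factorial 2 : ℝ) = 2 by norm_num [Nat.factorial]]
  field_simp

lemma chebA_diag (n : ℕ) : chebA (n+1) (n+1) = 1 := by
  rw [chebA_of_le n (n+1) le_rfl]
  have h1 : n + 1 - (n+1) = 0 := by omega
  have h2 : 2*(n+1) = (2*n+1)+1 := by omega
  rw [h1, h2, show n + (n+1) = 2*n+1 by omega]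
  have h4 : (Nat.factorial ((2*n+1)+1) : ℝ) = ((2*n+1)+1) * Nat.factorial (2*n+1) := by
    rw [Nat.factorial_succ]; push_cast; ring
  rw [h4]
  have h3 : (Nat.factorial (2*n+1) : ℝ) ≠ 0 := Nat.cast_ne_zero.mpr (Nat.factorial_ne_zero _)
  rw [show (Nat.factorial 0 : ℝ) = 1 by norm_num [Nat.factorial]]
  field_simp
  push_cast; ring

lemma chebA_pos (n k : ℕ) (h : k ≤ n+1) : 0 < chebA (n+1) k := by
  rw [chebA_of_le n k h]
  have h1 := Nat.factorial_pos (n+k)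
  have h2 := Nat.factorial_pos (2*k)
  have h3 := Nat.factorial_pos (n+1-k)
  positivity

lemma chebA_subdiag (n : ℕ) : chebA (n+1) n = 2*((n:ℝ)+1) := by
  rw [chebA_of_le n n (by omega)]
  have h1 : n + 1 - n = 1 := by omega
  rw [h1, show n + n = 2*n by omega]
  rw [show (Nat.factorial 1 : ℝ) = 1 by norm_num [Nat.factorial]]
  have h3 : (Nat.factorial (2*n) : ℝ) ≠ 0 := Nat.cast_ne_zero.mpr (Nat.factorial_ne_zero _)
  field_simp

lemma fact_cast_succ (a : ℕ) :
    (Nat.factorial (a+1) : ℝ) = ((a:ℝ)+1) * Nat.factorial a := by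
  rw [Nat.factorial_succ]; push_cast; ring

lemma fact_cast_ne (a : ℕ) : (Nat.factorial a : ℝ) ≠ 0 :=
  Nat.cast_ne_zero.mpr (Nat.factorial_ne_zero a)

lemma chebA_rec (n k : ℕ) :
    chebA (n+2) (k+1) = 2*chebA (n+1) (k+1) + chebA (n+1) k - chebA n (k+1) := by
  by_cases h1 : n+2 ≤ k
  · rw [chebA_eq_zero (n+2) (k+1) (by omega), chebA_eq_zero (n+1) (k+1) (by omega),
      chebA_eq_zero (n+1) k (by omega), chebA_eq_zero n (k+1) (by omega)]
    ring
  by_cases h2 : k = n+1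
  · subst h2
    rw [show n+1+1 = (n+1)+1 from rfl, chebA_diag (n+1), chebA_eq_zero (n+1) (n+1+1) (by omega),
      chebA_diag n, chebA_eq_zero n (n+1+1) (by omega)]
    ring
  by_cases h3 : k = n
  · subst h3
    rw [show chebA (k+2) (k+1) = chebA ((k+1)+1) (k+1) from rfl, chebA_subdiag (k+1),
      chebA_diag k, chebA_subdiag k, chebA_eq_zero k (k+1) (by omega)]
    push_cast; ring
  · -- k+1 ≤ n
    obtain ⟨m, rfl⟩ : ∃ m, n = k+m+1 := ⟨n-k-1, by omega⟩
    rw [show chebA (k+m+1+2) (k+1) = chebA ((k+m+2)+1) (k+1) from rfl,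
      chebA_of_le (k+m+2) (k+1) (by omega),
      show chebA (k+m+1+1) (k+1) = chebA ((k+m+1)+1) (k+1) from rfl,
      chebA_of_le (k+m+1) (k+1) (by omega),
      show chebA (k+m+1+1) k = chebA ((k+m+1)+1) k from rfl,
      chebA_of_le (k+m+1) k (by omega),
      show chebA (k+m+1) (k+1) = chebA ((k+m)+1) (k+1) from rfl,
      chebA_of_le (k+m) (k+1) (by omega)]
    rw [show k+m+2+(k+1) = (2*k+m+2)+1 by omega, show k+m+2+1-(k+1) = (m+1)+1 by omega,
      show k+m+1+(k+1) = (2*k+m+1)+1 by omega, show k+m+1+1-(k+1) = m+1 by omega,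
      show k+m+1+k = (2*k+m)+1 by omega, show k+m+1+1-k = (m+1)+1 by omega,
      show k+m+(k+1) = (2*k+m)+1 by omega, show k+m+1-(k+1) = m by omega,
      show 2*(k+1) = (2*k+1)+1 by omega]
    rw [fact_cast_succ (2*k+m+2), fact_cast_succ (2*k+m+1), fact_cast_succ (2*k+m),
      fact_cast_succ (m+1), fact_cast_succ ((2*k)+1), fact_cast_succ (2*k), fact_cast_succ m]
    have e1 := fact_cast_ne (2*k)
    have e2 := fact_cast_ne m
    have e3 := fact_cast_ne (2*k+m)
    push_cast
    field_simp
    ring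

lemma chebA_ratio (m k : ℕ) :
    ((m:ℝ)+1) * (((m:ℝ)+2) - k) * chebA (m+2) k
      = ((m:ℝ)+2) * (((m:ℝ)+1) + k) * chebA (m+1) k := by
  by_cases h1 : m+2 < k
  · rw [chebA_eq_zero (m+2) k (by omega), chebA_eq_zero (m+1) k (by omega)]; ring
  by_cases h2 : k = m+2
  · subst h2
    rw [show chebA (m+2) (m+2) = chebA ((m+1)+1) ((m+1)+1) from rfl, chebA_diag (m+1),
      chebA_eq_zero (m+1) (m+2) (by omega)]
    push_cast; ring
  rcases Nat.eq_zero_or_eq_succ_pred k with h3 | h3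
  · subst h3
    rw [chebA_zero, chebA_zero]; push_cast; ring
  · obtain ⟨k', rfl⟩ : ∃ k', k = k'+1 := ⟨k-1, h3⟩
    obtain ⟨j, rfl⟩ : ∃ j, m = k'+j := ⟨m-k', by omega⟩
    rw [show chebA (k'+j+2) (k'+1) = chebA ((k'+j+1)+1) (k'+1) from rfl,
      chebA_of_le (k'+j+1) (k'+1) (by omega),
      show chebA (k'+j+1) (k'+1) = chebA ((k'+j)+1) (k'+1) from rfl,
      chebA_of_le (k'+j) (k'+1) (by omega)]
    rw [show k'+j+1+(k'+1) = (2*k'+j+1)+1 by omega, show k'+j+1+1-(k'+1) = j+1 by omega,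
      show k'+j+(k'+1) = (2*k'+j)+1 by omega, show k'+j+1-(k'+1) = j by omega]
    rw [fact_cast_succ (2*k'+j+1), fact_cast_succ (2*k'+j), fact_cast_succ j]
    have e1 := fact_cast_ne (2*(k'+1))
    have e2 := fact_cast_ne j
    have e3 := fact_cast_ne (2*k'+j)
    push_cast
    field_simp
    ring

lemma cheb_expand (b : ℝ) (hb : b ≠ 0) (N : ℕ) :
    ∀ n, n + 3 ≤ N →
      b^n + b⁻¹^n = ∑ k ∈ range N, chebA n k * (b + b⁻¹ - 2)^k := by
  intro n
  induction n using Nat.twoStepInduction with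
  | zero =>
    intro hN
    have hs : ∑ k ∈ range N, chebA 0 k * (b + b⁻¹ - 2)^k
        = chebA 0 0 * (b + b⁻¹ - 2)^0 :=
      Finset.sum_eq_single_of_mem 0 (mem_range.mpr (by omega))
        (fun k _ hk => by rw [chebA_eq_zero 0 k (by omega)]; ring)
    rw [hs, show chebA 0 0 = 2 from rfl]
    norm_num
  | one =>
    intro hN
    obtain ⟨M, rfl⟩ : ∃ M, N = M+2 := ⟨N-2, by omega⟩
    rw [Finset.sum_range_succ' (fun k => chebA 1 k * (b + b⁻¹ - 2)^k) (M+1),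
      Finset.sum_range_succ' (fun k => chebA 1 (k+1) * (b + b⁻¹ - 2)^(k+1)) M]
    have hz : ∑ k ∈ range M, chebA 1 (k+1+1) * (b + b⁻¹ - 2)^(k+1+1) = 0 :=
      Finset.sum_eq_zero (fun k _ => by rw [chebA_eq_zero 1 (k+1+1) (by omega)]; ring)
    rw [hz, chebA_zero, show chebA 1 (0+1) = 1 from chebA_diag 0]
    ring
  | more n ihn ihn1 =>
    intro hN
    have h1 := ihn (by omega)
    have h2 := ihn1 (by omega)
    set u := b + b⁻¹ - 2 with hu
    have hrec : b^(n+2) + b⁻¹^(n+2) = (2+u)*(b^(n+1)+b⁻¹^(n+1)) - (b^n + b⁻¹^n) := by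
      rw [hu]; linear_combination (-(b^n + b⁻¹^n)) * mul_inv_cancel₀ hb
    rw [hrec, h1, h2]
    obtain ⟨M, rfl⟩ : ∃ M, N = M+1 := ⟨N-1, by omega⟩
    have hT : u * ∑ k ∈ range (M+1), chebA (n+1) k * u^k
        = ∑ k ∈ range M, chebA (n+1) k * u^(k+1) := by
      calc u * ∑ k ∈ range (M+1), chebA (n+1) k * u^k
          = ∑ k ∈ range (M+1), chebA (n+1) k * u^(k+1) := by
            rw [Finset.mul_sum]; exact Finset.sum_congr rfl (fun k _ => by ring)
        _ = ∑ k ∈ range M, chebA (n+1) k * u^(k+1) := by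
            rw [Finset.sum_range_succ, chebA_eq_zero (n+1) M (by omega)]; ring
    have key : ∑ k ∈ range (M+1), chebA (n+2) k * u^k
        = 2*(∑ k ∈ range (M+1), chebA (n+1) k * u^k)
          + (∑ k ∈ range M, chebA (n+1) k * u^(k+1))
          - ∑ k ∈ range (M+1), chebA n k * u^k := by
      rw [Finset.sum_range_succ' (fun k => chebA (n+2) k * u^k) M,
        Finset.sum_range_succ' (fun k => chebA (n+1) k * u^k) M,
        Finset.sum_range_succ' (fun k => chebA n k * u^k) M]
      have hcomb : ∑ k ∈ range M, chebA (n+2) (k+1) * u^(k+1)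
          = ∑ k ∈ range M, (2*(chebA (n+1) (k+1) * u^(k+1))
              + chebA (n+1) k * u^(k+1) - chebA n (k+1) * u^(k+1)) :=
        Finset.sum_congr rfl (fun k _ => by rw [chebA_rec n k]; ring)
      rw [hcomb, Finset.sum_sub_distrib, Finset.sum_add_distrib, ← Finset.mul_sum,
        chebA_zero, chebA_zero, chebA_zero]
      ring
    rw [key, ← hT]
    ring

set_option maxHeartbeats 1000000 in
/-- If `l₂ > (2(2p+3)/(p(p+1)))·l₁` then the CSC condition polynomial `f` for the
Wang–Ziller manifold `M^{1,p}_{l₂,l₁}` has exactly three distinct positive real roots,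
and the roots different from `1` come in reciprocal pairs. -/
theorem stmt9 (p : ℕ) (hp : 1 ≤ p) (l1 l2 : ℝ) (hl1 : 0 < l1) (hl2 : 0 < l2)
    (hgt : (2 * (2 * (p : ℝ) + 3) / ((p : ℝ) * ((p : ℝ) + 1))) * l1 < l2)
    (f : ℝ → ℝ)
    (hf : ∀ b : ℝ, f b =
      -l1 * b ^ (2 * p + 4) + (l2 + l1) * b ^ (2 * p + 3)
      - (((p : ℝ) + 1) ^ 2 * l2 - (2 * (p : ℝ) + 3) * l1) * b ^ (p + 3)
      + 2 * ((p : ℝ) * ((p : ℝ) + 2) * l2 - (2 * (p : ℝ) + 3) * l1) * b ^ (p + 2)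
      - (((p : ℝ) + 1) ^ 2 * l2 - (2 * (p : ℝ) + 3) * l1) * b ^ (p + 1)
      + (l2 + l1) * b - l1) :
    (∃ a b c : ℝ, a ≠ b ∧ a ≠ c ∧ b ≠ c ∧ 0 < a ∧ 0 < b ∧ 0 < c ∧
      {x : ℝ | 0 < x ∧ f x = 0} = {a, b, c}) ∧
    ∀ b₀ : ℝ, 0 < b₀ → f b₀ = 0 → b₀ ≠ 1 → f (1 / b₀) = 0 := by
  have hp0 : (0:ℝ) < (p:ℝ) := by exact_mod_cast Nat.pos_of_ne_zero (by omega)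
  set c : ℕ → ℝ := fun k => (l2 + l1) * chebA (p+1) k - l1 * chebA (p+2) k with hc
  set Q : ℝ → ℝ := fun s => ∑ j ∈ range (p+1), c (j+2) * s^j with hQ
  -- key factorization
  have key : ∀ b : ℝ, 0 < b →
      f b = b^(p+2) * ((b + b⁻¹ - 2)^2 * Q (b + b⁻¹ - 2)) := by
    intro b hb
    have hbne : b ≠ 0 := ne_of_gt hb
    have h1 := cheb_expand b hbne (p+5) (p+1) (by omega)
    have h2 := cheb_expand b hbne (p+5) (p+2) (by omega)
    set u := b + b⁻¹ - 2 with hu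
    have hsum : ∑ k ∈ range (p+5), c k * u^k
        = (l2+l1) * (b^(p+1) + b⁻¹^(p+1)) - l1 * (b^(p+2)+b⁻¹^(p+2)) := by
      rw [h1, h2, Finset.mul_sum, Finset.mul_sum, ← Finset.sum_sub_distrib]
      exact Finset.sum_congr rfl (fun k _ => by simp only [hc]; ring)
    have hc3 : c (p+3) = 0 := by
      simp only [hc]
      rw [chebA_eq_zero (p+1) (p+3) (by omega), chebA_eq_zero (p+2) (p+3) (by omega)]; ring
    have hc4 : c (p+4) = 0 := by
      simp only [hc]
      rw [chebA_eq_zero (p+1) (p+4) (by omega), chebA_eq_zero (p+2) (p+4) (by omega)]; ring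
    have hQu : u^2 * Q u = ∑ j ∈ range (p+1), c (j+2) * u^(j+2) := by
      simp only [hQ]
      rw [Finset.mul_sum]
      exact Finset.sum_congr rfl (fun j _ => by ring)
    have hpeel : ∑ k ∈ range (p+5), c k * u^k = c 0 + c 1 * u + u^2 * Q u := by
      rw [Finset.sum_range_succ' (fun k => c k * u^k) (p+4),
          Finset.sum_range_succ' (fun k => c (k+1) * u^(k+1)) (p+3),
          Finset.sum_range_succ (fun k => c (k+1+1) * u^(k+1+1)) (p+2),
          Finset.sum_range_succ (fun k => c (k+1+1) * u^(k+1+1)) (p+1)]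
      rw [show p+2+1+1 = p+4 by omega, show p+1+1+1 = p+3 by omega, hc3, hc4, hQu]
      ring
    have hc0 : c 0 = 2*l2 := by simp only [hc]; rw [chebA_zero, chebA_zero]; ring
    have hc1 : c 1 = (l2+l1)*((p:ℝ)+1)^2 - l1*((p:ℝ)+2)^2 := by
      simp only [hc]
      rw [chebA_one p, show chebA (p+2) 1 = chebA ((p+1)+1) 1 from rfl, chebA_one (p+1)]
      push_cast; ring
    have hfb : f b = b^(p+2) * ((∑ k ∈ range (p+5), c k * u^k)
        - (((p:ℝ)+1)^2*l2 - (2*(p:ℝ)+3)*l1)*(2+u)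
        + 2*((p:ℝ)*((p:ℝ)+2)*l2 - (2*(p:ℝ)+3)*l1)) := by
      rw [hf b, hsum, hu]
      have h3 : b * b⁻¹ = 1 := mul_inv_cancel₀ hbne
      have h1' : (b * b⁻¹)^(p+1) = 1 := by rw [h3, one_pow]
      have h2' : (b * b⁻¹)^(p+2) = 1 := by rw [h3, one_pow]
      linear_combination (-(l2+l1)*b) * h1' + l1 * h2'
        + (((p:ℝ)+1)^2*l2 - (2*(p:ℝ)+3)*l1) * b^(p+1) * h3
    rw [hfb, hpeel, hc0, hc1]
    ring
  -- sign structure of coefficients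
  set σ : ℕ → ℝ := fun k => (l2+l1)*(((p:ℝ)+1)*(((p:ℝ)+2)-k)) - l1*(((p:ℝ)+2)*(((p:ℝ)+1)+k))
    with hσ
  have hcσ : ∀ k : ℕ, ((p:ℝ)+1)*(((p:ℝ)+2)-k) * c k = chebA (p+1) k * σ k := by
    intro k
    simp only [hc, hσ]
    linear_combination (-l1) * chebA_ratio p k
  have hsign_pos : ∀ k, k ≤ p+1 → 0 < σ k → 0 < c k := by
    intro k hk hσk
    have hA : 0 < chebA (p+1) k := chebA_pos p k hk
    have hkr : (k:ℝ) ≤ (p:ℝ)+1 := by exact_mod_cast hk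
    have hfac : 0 < ((p:ℝ)+1)*(((p:ℝ)+2)-(k:ℝ)) := by nlinarith
    nlinarith [hcσ k]
  have hsign_nonpos : ∀ k, k ≤ p+1 → σ k ≤ 0 → c k ≤ 0 := by
    intro k hk hσk
    have hA : 0 < chebA (p+1) k := chebA_pos p k hk
    have hkr : (k:ℝ) ≤ (p:ℝ)+1 := by exact_mod_cast hk
    have hfac : 0 < ((p:ℝ)+1)*(((p:ℝ)+2)-(k:ℝ)) := by nlinarith
    nlinarith [hcσ k]
  have hσmono : ∀ k k' : ℕ, k ≤ k' → σ k' ≤ σ k := by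
    intro k k' h
    have hkr : (k:ℝ) ≤ (k':ℝ) := by exact_mod_cast h
    have hdd : (0:ℝ) ≤ ((l2+l1)*((p:ℝ)+1) + l1*((p:ℝ)+2)) * ((k':ℝ) - (k:ℝ)) :=
      mul_nonneg (by nlinarith) (by linarith)
    have he : σ k - σ k' = ((l2+l1)*((p:ℝ)+1) + l1*((p:ℝ)+2)) * ((k':ℝ) - (k:ℝ)) := by
      simp only [hσ]; ring
    linarith
  have hσ2 : 0 < σ 2 := by
    have h0 : (0:ℝ) < (p:ℝ)*((p:ℝ)+1) := by positivity
    rw [div_mul_eq_mul_div, div_lt_iff₀ h0] at hgt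
    simp only [hσ]
    push_cast
    nlinarith
  set T : Finset ℕ := (range p).filter (fun j => 0 < σ (j+2)) with hT
  have hT0 : 0 ∈ T := Finset.mem_filter.mpr ⟨Finset.mem_range.mpr (by omega), hσ2⟩
  set J := T.max' ⟨0, hT0⟩ with hJdef
  have hJT : J ∈ T := T.max'_mem _
  have hJp : J < p := Finset.mem_range.mp (Finset.mem_filter.mp hJT).1
  have hJσ : 0 < σ (J+2) := (Finset.mem_filter.mp hJT).2
  have he_pos : ∀ j, j ≤ J → 0 < c (j+2) := fun j hj =>
    hsign_pos (j+2) (by omega) (lt_of_lt_of_le hJσ (hσmono (j+2) (J+2) (by omega)))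
  have he_nonpos : ∀ j, J < j → j < p → c (j+2) ≤ 0 := by
    intro j h1 h2
    have hσj : σ (j+2) ≤ 0 := by
      by_contra h
      push_neg at h
      exact absurd (T.le_max' j (Finset.mem_filter.mpr ⟨Finset.mem_range.mpr h2, h⟩)) (by omega)
    exact hsign_nonpos (j+2) (by omega) hσj
  have he_top : c (p+2) = -l1 := by
    simp only [hc]
    rw [chebA_eq_zero (p+1) (p+2) (by omega),
      show chebA (p+2) (p+2) = chebA ((p+1)+1) ((p+1)+1) from rfl, chebA_diag (p+1)]
    ring
  -- strict single-crossing
  have hmono : ∀ s t : ℝ, 0 < s → s < t → Q t * s^J < Q s * t^J := by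
    intro s t hs hst
    have ht : 0 < t := hs.trans hst
    have hsum2 : Q t * s^J - Q s * t^J
        = ∑ j ∈ range (p+1), c (j+2) * (t^j*s^J - s^j*t^J) := by
      simp only [hQ]
      rw [Finset.sum_mul, Finset.sum_mul, ← Finset.sum_sub_distrib]
      exact Finset.sum_congr rfl (fun j _ => by ring)
    have hlt : ∀ j ∈ range (p+1), c (j+2) * (t^j*s^J - s^j*t^J) ≤ 0 := by
      intro j hj
      have hjp : j ≤ p := by have := Finset.mem_range.mp hj; omega
      rcases le_or_gt j J with hjJ | hjJ
      · obtain ⟨d, hd⟩ : ∃ d, J = j + d := ⟨J - j, by omega⟩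
        have hbr : t^j*s^J - s^j*t^J = s^j*t^j*(s^d - t^d) := by rw [hd]; ring
        rw [hbr]
        apply mul_nonpos_of_nonneg_of_nonpos (he_pos j hjJ).le
        apply mul_nonpos_of_nonneg_of_nonpos (by positivity)
        have := pow_le_pow_left₀ hs.le hst.le d
        linarith
      · obtain ⟨d, hd⟩ : ∃ d, j = J + d := ⟨j - J, by omega⟩
        have hcle : c (j+2) ≤ 0 := by
          rcases eq_or_lt_of_le hjp with h | h
          · rw [h, he_top]; linarith
          · exact he_nonpos j hjJ h
        have hbr : t^j*s^J - s^j*t^J = s^J*t^J*(t^d - s^d) := by rw [hd]; ring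
        rw [hbr]
        apply mul_nonpos_of_nonpos_of_nonneg hcle
        apply mul_nonneg (by positivity)
        have := pow_le_pow_left₀ hs.le hst.le d
        linarith
    have hstrict : c (p+2) * (t^p*s^J - s^p*t^J) < 0 := by
      obtain ⟨d, hd⟩ : ∃ d, p = J + d := ⟨p - J, by omega⟩
      have hdne : d ≠ 0 := by omega
      have hbr : t^p*s^J - s^p*t^J = s^J*t^J*(t^d - s^d) := by rw [hd]; ring
      rw [he_top, hbr]
      apply mul_neg_of_neg_of_pos (by linarith)
      apply mul_pos (by positivity)
      have := pow_lt_pow_left₀ hst hs.le hdne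
      linarith
    have hneg : ∑ j ∈ range (p+1), c (j+2) * (t^j*s^J - s^j*t^J) < 0 := by
      have h0 : ∑ j ∈ range (p+1), (0:ℝ) = 0 := Finset.sum_const_zero
      have := Finset.sum_lt_sum hlt ⟨p, Finset.mem_range.mpr (by omega), hstrict⟩
      rw [h0] at this
      exact this
    linarith [hsum2, hneg]
  -- Q 0 > 0
  have hQ0 : 0 < Q 0 := by
    have hQ0e : Q 0 = c 2 := by
      simp only [hQ]
      rw [Finset.sum_eq_single_of_mem 0 (Finset.mem_range.mpr (by omega))
        (fun j _ hj => by rw [zero_pow hj]; ring)]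
      norm_num
    rw [hQ0e]
    exact he_pos 0 (Nat.zero_le J)
  -- Q is negative at a large point
  set Mb : ℝ := 1 + (∑ j ∈ range p, |c (j+2)|)/l1 with hMb
  have hSnn : 0 ≤ ∑ j ∈ range p, |c (j+2)| := Finset.sum_nonneg (fun j _ => abs_nonneg _)
  have hM1 : 1 ≤ Mb := by
    rw [hMb]
    have : 0 ≤ (∑ j ∈ range p, |c (j+2)|)/l1 := div_nonneg hSnn hl1.le
    linarith
  have hMb0 : 0 < Mb := by linarith
  have hMneg : Q Mb < 0 := by
    simp only [hQ]
    rw [Finset.sum_range_succ]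
    obtain ⟨pm, hpm⟩ : ∃ pm, p = pm+1 := ⟨p-1, by omega⟩
    have hb1 : ∑ j ∈ range p, c (j+2) * Mb^j ≤ (∑ j ∈ range p, |c (j+2)|) * Mb^pm := by
      rw [Finset.sum_mul]
      apply Finset.sum_le_sum
      intro j hj
      have hjpm : j ≤ pm := by have := Finset.mem_range.mp hj; omega
      have h1 : c (j+2) * Mb^j ≤ |c (j+2)| * Mb^j :=
        mul_le_mul_of_nonneg_right (le_abs_self _) (pow_nonneg (by linarith) j)
      exact h1.trans (mul_le_mul_of_nonneg_left
        (pow_le_pow_right₀ hM1 hjpm) (abs_nonneg _))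
    have htop : c (p+2) * Mb^p = -l1 * (Mb^pm * Mb) := by
      rw [he_top, hpm, pow_succ]
    rw [htop]
    have hMl : l1 * Mb = l1 + ∑ j ∈ range p, |c (j+2)| := by
      rw [hMb]
      field_simp
    have hppos : (0:ℝ) < Mb^pm := pow_pos hMb0 pm
    nlinarith [hb1, hppos, hMl]
  -- existence of positive root of Q
  have hQcont : Continuous Q := by
    simp only [hQ]
    exact continuous_finset_sum _ (fun j _ => continuous_const.mul (continuous_pow j))
  obtain ⟨s₀, hs₀mem, hQs₀⟩ : ∃ s₀ ∈ Set.Ioo (0:ℝ) Mb, Q s₀ = 0 := by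
    have hsub := intermediate_value_Ioo' (le_of_lt hMb0) hQcont.continuousOn (a := 0) (b := Mb)
    obtain ⟨s₀, h1, h2⟩ := hsub ⟨hMneg, hQ0⟩
    exact ⟨s₀, h1, h2⟩
  have hs₀pos : 0 < s₀ := hs₀mem.1
  have huniq : ∀ s : ℝ, 0 < s → Q s = 0 → s = s₀ := by
    intro s hs hQs
    rcases lt_trichotomy s s₀ with h | h | h
    · exfalso
      have := hmono s s₀ hs h
      rw [hQs₀, hQs] at this
      simp at this
    · exact h
    · exfalso
      have := hmono s₀ s hs₀pos h
      rw [hQs₀, hQs] at this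
      simp at this
  -- the pair of reciprocal roots
  set t₀ : ℝ := 2 + s₀ with ht₀
  have hdisc : 0 < t₀^2 - 4 := by rw [ht₀]; nlinarith
  set r : ℝ := Real.sqrt (t₀^2 - 4) with hr
  have hsq : r^2 = t₀^2 - 4 := Real.sq_sqrt hdisc.le
  have hrpos : 0 < r := Real.sqrt_pos.mpr hdisc
  set a : ℝ := (t₀ + r)/2 with ha
  have ht₀2 : 2 < t₀ := by rw [ht₀]; linarith
  have ha1 : 1 < a := by rw [ha]; linarith
  have hapos : 0 < a := zero_lt_one.trans ha1
  have hane : a ≠ 0 := ne_of_gt hapos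
  have haq : a^2 - t₀*a + 1 = 0 := by
    rw [ha]
    linear_combination hsq / 4
  have hainv : a⁻¹ = t₀ - a :=
    inv_eq_of_mul_eq_one_right (by linear_combination -haq)
  have haeq : a + a⁻¹ = t₀ := by rw [hainv]; ring
  have hua : a + a⁻¹ - 2 = s₀ := by rw [haeq, ht₀]; ring
  have hainvpos : 0 < a⁻¹ := inv_pos.mpr hapos
  have hainv1 : a⁻¹ < 1 := by
    rw [inv_eq_one_div, div_lt_one hapos]
    exact ha1
  have huainv : a⁻¹ + (a⁻¹)⁻¹ - 2 = s₀ := by rw [inv_inv]; linarith [hua]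
  -- root characterization
  have hroot : ∀ x : ℝ, 0 < x → (f x = 0 ↔ x = 1 ∨ x = a ∨ x = a⁻¹) := by
    intro x hx
    have hxne : x ≠ 0 := ne_of_gt hx
    constructor
    · intro hfx
      by_cases hx1 : x = 1
      · exact Or.inl hx1
      refine Or.inr ?_
      have hu : 0 < x + x⁻¹ - 2 := by
        have h1 : x + x⁻¹ - 2 = (x-1)^2 / x := by field_simp; ring
        have h2 : x - 1 ≠ 0 := sub_ne_zero.mpr hx1
        rw [h1]
        positivity
      have hQu : Q (x + x⁻¹ - 2) = 0 := by
        have hk := key x hx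
        rw [hfx] at hk
        have hxp : x^(p+2) ≠ 0 := pow_ne_zero _ hxne
        have hu2 : (x + x⁻¹ - 2)^2 ≠ 0 := pow_ne_zero _ (ne_of_gt hu)
        rcases mul_eq_zero.mp hk.symm with h | h
        · exact absurd h hxp
        rcases mul_eq_zero.mp h with h' | h'
        · exact absurd h' hu2
        · exact h'
      have hseq : x + x⁻¹ - 2 = s₀ := huniq _ hu hQu
      have hxeq : x^2 - t₀*x + 1 = 0 := by
        have h2 : x + x⁻¹ = t₀ := by rw [ht₀]; linarith [hseq]
        have h3 : (x + x⁻¹)*x = t₀*x := by rw [h2]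
        rw [add_mul, inv_mul_cancel₀ hxne] at h3
        linear_combination h3
      have hxx : (x - a) * (x - a⁻¹) = 0 := by
        have haa : a * a⁻¹ = 1 := mul_inv_cancel₀ hane
        have hfactor : (x - a) * (x - a⁻¹) = x^2 - t₀*x + 1 := by
          rw [← haeq]
          linear_combination haa
        rw [hfactor, hxeq]
      rcases mul_eq_zero.mp hxx with h | h
      · exact Or.inl (sub_eq_zero.mp h)
      · exact Or.inr (sub_eq_zero.mp h)
    · intro hx3
      rcases hx3 with rfl | rfl | rfl
      · rw [key 1 one_pos]
        norm_num
      · rw [key a hapos, hua, hQs₀]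
        ring
      · rw [key a⁻¹ hainvpos, huainv, hQs₀]
        ring
  constructor
  · refine ⟨a⁻¹, 1, a, ne_of_lt hainv1, ne_of_lt (hainv1.trans ha1), ne_of_lt ha1,
      hainvpos, one_pos, hapos, ?_⟩
    ext x
    simp only [Set.mem_setOf_eq, Set.mem_insert_iff, Set.mem_singleton_iff]
    constructor
    · rintro ⟨hx, hfx⟩
      rcases (hroot x hx).mp hfx with h | h | h
      · exact Or.inr (Or.inl h)
      · exact Or.inr (Or.inr h)
      · exact Or.inl h
    · rintro (rfl | rfl | rfl)
      · exact ⟨hainvpos, (hroot _ hainvpos).mpr (Or.inr (Or.inr rfl))⟩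
      · exact ⟨one_pos, (hroot _ one_pos).mpr (Or.inl rfl)⟩
      · exact ⟨hapos, (hroot _ hapos).mpr (Or.inr (Or.inl rfl))⟩
  · intro b₀ hb₀ hfb₀ hb₀1
    rcases (hroot b₀ hb₀).mp hfb₀ with h | h | h
    · exact absurd h hb₀1
    · subst h
      rw [one_div]
      exact (hroot _ hainvpos).mpr (Or.inr (Or.inr rfl))
    · subst h
      rw [one_div, inv_inv]
      exact (hroot _ hapos).mpr (Or.inr (Or.inl rfl))
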